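/- For any sequence m = (m_1, …, m_n) ∈ {−1,0,1}^n and any m-pair (a, b) with a < b, the sum of the original entries strictly between the two paired positions vanishes: Σ_{a<ℓ<b} m_ℓ = 0. -/

import Mathlib

/-- One step of the pairing algorithm deletes (zeroes out) positions `a` and `b`. -/
def zeroOut {n : ℕ} (m : Fin n → ℤ) (a b : Fin n) : Fin n → ℤ :=
  Function.update (Function.update m a 0) b 0

/-- `ChosenPair m a b` : `(a, b)` is the (unique) pair chosen at the current step of the
pairing algorithm: `a < b`, `m a * m b = -1`, all entries strictly between `a` and `b`
vanish, and all entries before `a` have sign compatible with `m a`. -/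
def ChosenPair {n : ℕ} (m : Fin n → ℤ) (a b : Fin n) : Prop :=
  a < b ∧ m a * m b = -1 ∧ (∀ ℓ, a < ℓ → ℓ < b → m ℓ = 0) ∧
    (∀ ℓ, ℓ < a → 0 ≤ m a * m ℓ)

/-- `IsMPair m a b` : `(a, b)` is an `m`-pair, i.e. it is chosen at some step of the
recursive pairing algorithm: either `(a, b)` is the pair chosen for `m`, or it is a pair of
the sequence obtained from `m` by zeroing out the entries of the chosen pair of `m`. -/
inductive IsMPair {n : ℕ} : (Fin n → ℤ) → Fin n → Fin n → Prop
  | chosen {m : Fin n → ℤ} {a b : Fin n} : ChosenPair m a b → IsMPair m a b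
  | later {m : Fin n → ℤ} {a b a' b' : Fin n} :
      ChosenPair m a' b' → IsMPair (zeroOut m a' b') a b → IsMPair m a b

lemma zeroOut_apply {n : ℕ} (m : Fin n → ℤ) (a b ℓ : Fin n) (h1 : ℓ ≠ a) (h2 : ℓ ≠ b) :
    zeroOut m a b ℓ = m ℓ := by
  simp [zeroOut, Function.update_of_ne h1, Function.update_of_ne h2]

lemma zeroOut_snd {n : ℕ} (m : Fin n → ℤ) (a b : Fin n) : zeroOut m a b b = 0 := by
  simp [zeroOut]

lemma zeroOut_fst {n : ℕ} (m : Fin n → ℤ) {a b : Fin n} (h : a ≠ b) : zeroOut m a b a = 0 := by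
  simp [zeroOut, Function.update_of_ne h]

lemma isMPair_ne_zero {n : ℕ} {m : Fin n → ℤ} {a b : Fin n} (h : IsMPair m a b) :
    m a ≠ 0 ∧ m b ≠ 0 := by
  induction h with
  | @chosen m a b h =>
    obtain ⟨_, hmul, _, _⟩ := h
    constructor <;> intro h0 <;> rw [h0] at hmul <;> simp at hmul
  | @later m a b a' b' hc hrec ih =>
    constructor
    · intro h0
      by_cases h1 : a = b'
      · exact ih.1 (by rw [h1]; exact zeroOut_snd m a' b')
      · by_cases h2 : a = a'
        · exact ih.1 (by rw [h2]; exact zeroOut_fst m hc.1.ne)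
        · exact ih.1 (by rw [zeroOut_apply m a' b' a h2 h1]; exact h0)
    · intro h0
      by_cases h1 : b = b'
      · exact ih.2 (by rw [h1]; exact zeroOut_snd m a' b')
      · by_cases h2 : b = a'
        · exact ih.2 (by rw [h2]; exact zeroOut_fst m hc.1.ne)
        · exact ih.2 (by rw [zeroOut_apply m a' b' b h2 h1]; exact h0)

lemma sum_zeroOut {n : ℕ} (m : Fin n → ℤ) (a' b' : Fin n) (hne : a' ≠ b')
    (s : Finset (Fin n)) :
    ∑ ℓ ∈ s, m ℓ = (∑ ℓ ∈ s, zeroOut m a' b' ℓ)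
      + (if a' ∈ s then m a' else 0) + (if b' ∈ s then m b' else 0) := by
  have key : ∀ ℓ, m ℓ = zeroOut m a' b' ℓ + (if ℓ = a' then m a' else 0)
      + (if ℓ = b' then m b' else 0) := by
    intro ℓ
    by_cases h1 : ℓ = b'
    · subst h1
      rw [if_neg (fun h => hne h.symm), if_pos rfl, zeroOut_snd]; ring
    · by_cases h2 : ℓ = a'
      · subst h2
        rw [if_pos rfl, if_neg h1, zeroOut_fst m hne]; ring
      · rw [if_neg h2, if_neg h1, zeroOut_apply m a' b' ℓ h2 h1]; ring
  rw [Finset.sum_congr rfl (fun ℓ _ => key ℓ), Finset.sum_add_distrib,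
    Finset.sum_add_distrib, Finset.sum_ite_eq' s a' (fun _ => m a'),
    Finset.sum_ite_eq' s b' (fun _ => m b')]

lemma mPair_aux {n : ℕ} {m : Fin n → ℤ} {a b : Fin n} (hpair : IsMPair m a b)
    (hm : ∀ i, m i = -1 ∨ m i = 0 ∨ m i = 1) :
    ∑ ℓ ∈ Finset.univ.filter (fun ℓ : Fin n => a < ℓ ∧ ℓ < b), m ℓ = 0 := by
  induction hpair with
  | @chosen m a b h =>
    refine Finset.sum_eq_zero fun ℓ hℓ => ?_
    rw [Finset.mem_filter] at hℓ
    exact h.2.2.1 ℓ hℓ.2.1 hℓ.2.2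
  | @later m a b a' b' hc hrec ih =>
    have hm' : ∀ i, zeroOut m a' b' i = -1 ∨ zeroOut m a' b' i = 0 ∨ zeroOut m a' b' i = 1 := by
      intro i
      by_cases h1 : i = b'
      · subst h1; simp [zeroOut]
      · by_cases h2 : i = a'
        · subst h2; simp [zeroOut, Function.update_of_ne h1]
        · rw [zeroOut_apply m a' b' i h2 h1]; exact hm i
    have hsum := ih hm'
    have hnz := isMPair_ne_zero hrec
    have haa' : a ≠ a' := fun h => hnz.1 (by rw [h]; exact zeroOut_fst m hc.1.ne)
    have hab' : a ≠ b' := fun h => hnz.1 (by rw [h]; exact zeroOut_snd m a' b')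
    have hba' : b ≠ a' := fun h => hnz.2 (by rw [h]; exact zeroOut_fst m hc.1.ne)
    have hbb' : b ≠ b' := fun h => hnz.2 (by rw [h]; exact zeroOut_snd m a' b')
    have hma : m a ≠ 0 := by rw [← zeroOut_apply m a' b' a haa' hab']; exact hnz.1
    have hmb : m b ≠ 0 := by rw [← zeroOut_apply m a' b' b hba' hbb']; exact hnz.2
    have hiff : (a < a' ∧ a' < b) ↔ (a < b' ∧ b' < b) := by
      constructor
      · rintro ⟨h1, h2⟩
        refine ⟨h1.trans hc.1, ?_⟩
        by_contra h
        push_neg at h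
        exact hmb (hc.2.2.1 b h2 (lt_of_le_of_ne h hbb'))
      · rintro ⟨h1, h2⟩
        refine ⟨?_, hc.1.trans h2⟩
        by_contra h
        push_neg at h
        exact hma (hc.2.2.1 a (lt_of_le_of_ne h haa'.symm) h1)
    rw [sum_zeroOut m a' b' hc.1.ne _]
    rw [hsum]
    simp only [Finset.mem_filter, Finset.mem_univ, true_and]
    have hsum0 : m a' + m b' = 0 := by
      have hmul := hc.2.1
      rcases hm a' with h | h | h <;> rcases hm b' with h' | h' | h' <;>
        rw [h, h'] at hmul ⊢ <;> omega
    by_cases hin : a < a' ∧ a' < b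
    · rw [if_pos hin, if_pos (hiff.mp hin)]; linarith
    · rw [if_neg hin, if_neg (fun h => hin (hiff.mpr h))]; ring

theorem mPair_sum_between_eq_zero {n : ℕ} (m : Fin n → ℤ)
    (hm : ∀ i, m i = -1 ∨ m i = 0 ∨ m i = 1) {a b : Fin n}
    (hpair : IsMPair m a b) (hab : a < b) :
    ∑ ℓ ∈ Finset.univ.filter (fun ℓ : Fin n => a < ℓ ∧ ℓ < b), m ℓ = 0 :=
  mPair_aux hpair hm
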